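/- Let n ≥ 3 and k be integers with 3 ≤ k ≤ n, and let h₁, …, hₙ be real numbers with h₁ + h₂ + ⋯ + hₙ = K. Then f(h₁,…,hₙ) ≤ ((n−2)/(2(n−1))) · K², where f(h₁,…,hₙ) = Σ_{1≤i<j≤n} hᵢhⱼ − (1/(k−1)) · h₁ · Σ_{i=2}^{k} hᵢ. -/
import Mathlib


open Finset

/-- The quadratic form `f(h₁,…,hₙ) = Σ_{1≤i<j≤n} hᵢhⱼ − (1/(k−1)) · h₁ · Σ_{i=2}^{k} hᵢ`
(indices written 0-based: `h₁ = h 0`, and `Σ_{i=2}^{k}` becomes the sum over `1 ≤ i < k`). -/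
noncomputable def chenF (n k : ℕ) (hn : 3 ≤ n) (h : Fin n → ℝ) : ℝ :=
  (∑ i : Fin n, ∑ j : Fin n, if i < j then h i * h j else 0)
    - (1 / ((k : ℝ) - 1)) * h ⟨0, by omega⟩ *
      (∑ i : Fin n, if 1 ≤ (i : ℕ) ∧ (i : ℕ) < k then h i else 0)

lemma chen_scalar (κ ν A S R Q1 Q2 : ℝ) (hκ : 3 ≤ κ) (hν : κ ≤ ν)
    (hQ1 : S^2 ≤ (κ-1)*Q1) (hQ2 : R^2 ≤ (ν-κ)*Q2) (hQ2' : 0 ≤ Q2) :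
    (κ-1)*(A+S+R)^2 ≤ (ν-1)*((κ-1)*(A^2+Q1+Q2) + 2*A*S) := by
  rcases eq_or_lt_of_le hν with rfl | hlt
  · have hR : R = 0 := by nlinarith [sq_nonneg R]
    subst hR
    nlinarith [mul_nonneg (mul_nonneg (by linarith : (0:ℝ) ≤ κ-1) (by linarith : (0:ℝ) ≤ κ-2)) (sq_nonneg A),
      mul_nonneg (by linarith : (0:ℝ) ≤ κ-1) (by linarith : 0 ≤ (κ-1)*Q1 - S^2),
      mul_nonneg (mul_nonneg (by linarith : (0:ℝ) ≤ κ-1) (by linarith : (0:ℝ) ≤ κ-1)) hQ2']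
  · have hm : (0:ℝ) < ν - κ := by linarith
    have hc : (0:ℝ) < κ - 1 := by linarith
    have h1 : 0 ≤ (ν-κ)*(κ-2)*((κ-1)^2*A^2) :=
      mul_nonneg (mul_nonneg hm.le (by linarith)) (by positivity)
    have h2 : 0 ≤ (κ-2)*((ν-κ)*S-(κ-1)*R)^2 := mul_nonneg (by linarith) (sq_nonneg _)
    have h3 : 0 ≤ ((ν-1)*(ν-κ)*(κ-1))*((κ-1)*Q1-S^2) :=
      mul_nonneg (mul_nonneg (mul_nonneg (by linarith) hm.le) hc.le) (by linarith)
    have h4 : 0 ≤ ((ν-1)*(κ-1)^2)*((ν-κ)*Q2-R^2) :=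
      mul_nonneg (mul_nonneg (by linarith) (by positivity)) (by linarith)
    nlinarith [h1, h2, h3, h4, sq_nonneg ((ν-κ)*((κ-1)*A+S)-(κ-1)*R), mul_pos hm hc]

theorem stmt_0 (n k : ℕ) (hn : 3 ≤ n) (hk : 3 ≤ k) (hkn : k ≤ n)
    (K : ℝ) (h : Fin n → ℝ) (hsum : ∑ i, h i = K) :
    chenF n k hn h ≤ ((n : ℝ) - 2) / (2 * ((n : ℝ) - 1)) * K ^ 2 := by
  set z : Fin n := ⟨0, by omega⟩ with hz
  set s1 : Finset (Fin n) := univ.filter (fun i => 1 ≤ (i:ℕ) ∧ (i:ℕ) < k) with hs1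
  set s2 : Finset (Fin n) := univ.filter (fun i => k ≤ (i:ℕ)) with hs2
  set A : ℝ := h z with hA
  set S : ℝ := ∑ i ∈ s1, h i with hSdef
  set R : ℝ := ∑ i ∈ s2, h i with hRdef
  set Q1 : ℝ := ∑ i ∈ s1, (h i)^2 with hQ1def
  set Q2 : ℝ := ∑ i ∈ s2, (h i)^2 with hQ2def
  -- decomposition of any sum over univ
  have hdecomp : ∀ f : Fin n → ℝ, ∑ i, f i = f z + ∑ i ∈ s1, f i + ∑ i ∈ s2, f i := by
    intro f
    have key : ∀ i : Fin n, f i = (if i = z then f i else 0)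
        + (if 1 ≤ (i:ℕ) ∧ (i:ℕ) < k then f i else 0) + (if k ≤ (i:ℕ) then f i else 0) := by
      intro i
      have hzv : (z:ℕ) = 0 := rfl
      rcases Nat.eq_zero_or_pos (i:ℕ) with h0 | h0
      · have hiz : i = z := Fin.ext (by rw [h0, hzv])
        rw [hiz, if_pos rfl, hzv, if_neg (by omega), if_neg (by omega)]
        ring
      · have hiz : i ≠ z := by
          intro hc; rw [hc, hzv] at h0; exact Nat.lt_irrefl 0 h0
        rw [if_neg hiz]
        by_cases h1 : (i:ℕ) < k
        · rw [if_pos ⟨h0, h1⟩, if_neg (by omega)]; ring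
        · rw [if_neg (by omega), if_pos (by omega)]; ring
    calc ∑ i, f i = ∑ i, ((if i = z then f i else 0)
        + (if 1 ≤ (i:ℕ) ∧ (i:ℕ) < k then f i else 0) + (if k ≤ (i:ℕ) then f i else 0)) :=
          Finset.sum_congr rfl (fun i _ => key i)
      _ = f z + ∑ i ∈ s1, f i + ∑ i ∈ s2, f i := by
          rw [Finset.sum_add_distrib, Finset.sum_add_distrib, Finset.sum_ite_eq' univ z f,
            hs1, hs2, Finset.sum_filter, Finset.sum_filter]
          simp
  -- cardinalities
  have hcard1 : s1.card = k - 1 := by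
    have hmap : s1.map Fin.valEmbedding = Finset.Ico 1 k := by
      ext m
      simp only [Finset.mem_map, Fin.valEmbedding_apply, hs1, Finset.mem_filter,
        Finset.mem_univ, true_and, Finset.mem_Ico]
      constructor
      · rintro ⟨i, ⟨h1, h2⟩, rfl⟩; exact ⟨h1, h2⟩
      · rintro ⟨h1, h2⟩; exact ⟨⟨m, by omega⟩, ⟨h1, h2⟩, rfl⟩
    have := Finset.card_map (f := Fin.valEmbedding) (s := s1)
    rw [hmap, Nat.card_Ico] at this
    omega
  have hcard2 : s2.card = n - k := by
    have hmap : s2.map Fin.valEmbedding = Finset.Ico k n := by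
      ext m
      simp only [Finset.mem_map, Fin.valEmbedding_apply, hs2, Finset.mem_filter,
        Finset.mem_univ, true_and, Finset.mem_Ico]
      constructor
      · rintro ⟨i, h1, rfl⟩; exact ⟨h1, i.isLt⟩
      · rintro ⟨h1, h2⟩; exact ⟨⟨m, h2⟩, h1, rfl⟩
    have := Finset.card_map (f := Fin.valEmbedding) (s := s2)
    rw [hmap, Nat.card_Ico] at this
    omega
  -- Cauchy-Schwarz
  have c1 : S^2 ≤ ((k:ℝ)-1) * Q1 := by
    have := sq_sum_le_card_mul_sum_sq (s := s1) (f := h)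
    rw [hcard1] at this
    have hcast : ((k - 1 : ℕ) : ℝ) = (k:ℝ) - 1 := by
      push_cast [Nat.cast_sub (by omega : 1 ≤ k)]; ring
    rwa [hcast] at this
  have c2 : R^2 ≤ ((n:ℝ)-(k:ℝ)) * Q2 := by
    have := sq_sum_le_card_mul_sum_sq (s := s2) (f := h)
    rw [hcard2] at this
    have hcast : ((n - k : ℕ) : ℝ) = (n:ℝ) - (k:ℝ) := by
      push_cast [Nat.cast_sub hkn]; ring
    rwa [hcast] at this
  have c3 : (0:ℝ) ≤ Q2 := Finset.sum_nonneg (fun i _ => sq_nonneg _)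
  -- sum decompositions
  have hKdec : K = A + S + R := by rw [← hsum, hdecomp h]
  have hQdec : ∑ i, (h i)^2 = A^2 + Q1 + Q2 := hdecomp (fun i => (h i)^2)
  -- pairwise product identity
  have pair : (∑ i : Fin n, ∑ j : Fin n, if i < j then h i * h j else 0)
      = ((∑ i, h i)^2 - ∑ i, (h i)^2)/2 := by
    have e1 : (∑ i, h i)^2 = ∑ i : Fin n, ∑ j : Fin n, h i * h j := by
      rw [sq, Finset.sum_mul_sum]
    have e2 : ∀ i : Fin n, ∑ j : Fin n, h i * h j
        = (∑ j : Fin n, if i < j then h i * h j else 0)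
          + (∑ j : Fin n, if j < i then h i * h j else 0) + (h i)^2 := by
      intro i
      have diag : (∑ j : Fin n, if j = i then h i * h j else 0) = (h i)^2 := by
        rw [Finset.sum_ite_eq' univ i (fun j => h i * h j)]
        simp [sq]
      calc ∑ j : Fin n, h i * h j
          = ∑ j : Fin n, ((if i < j then h i * h j else 0)
            + (if j < i then h i * h j else 0) + (if j = i then h i * h j else 0)) := by
            apply Finset.sum_congr rfl
            intro j _
            rcases lt_trichotomy i j with hij | hij | hij
            · simp [hij, not_lt_of_gt hij, (ne_of_lt hij).symm]
            · simp [hij.symm]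
            · simp [hij, not_lt_of_gt hij, ne_of_lt hij]
        _ = _ := by rw [Finset.sum_add_distrib, Finset.sum_add_distrib, diag]
    have e2' : ∑ i : Fin n, ∑ j : Fin n, h i * h j
        = (∑ i : Fin n, ∑ j : Fin n, if i < j then h i * h j else 0)
          + (∑ i : Fin n, ∑ j : Fin n, if j < i then h i * h j else 0)
          + ∑ i : Fin n, (h i)^2 := by
      rw [Finset.sum_congr rfl (fun i _ => e2 i), Finset.sum_add_distrib,
        Finset.sum_add_distrib]
    have e3 : (∑ i : Fin n, ∑ j : Fin n, if j < i then h i * h j else 0)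
        = ∑ i : Fin n, ∑ j : Fin n, if i < j then h i * h j else 0 := by
      rw [Finset.sum_comm]
      apply Finset.sum_congr rfl; intro i _
      apply Finset.sum_congr rfl; intro j _
      rcases lt_or_ge i j with hij | hij
      · simp [hij, mul_comm]
      · simp [not_lt_of_ge hij]
    rw [e3] at e2'
    linarith [e1, e2']
  -- rewrite chenF
  have hF : chenF n k hn h = (K^2 - (A^2 + Q1 + Q2))/2 - (1/((k:ℝ)-1)) * A * S := by
    rw [chenF, pair, hsum, hQdec, hSdef, hs1, Finset.sum_filter]
  rw [hF]
  -- main scalar inequality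
  have main := chen_scalar (k:ℝ) (n:ℝ) A S R Q1 Q2
    (by exact_mod_cast hk) (by exact_mod_cast hkn) c1 c2 c3
  have hκ1 : (0:ℝ) < (k:ℝ) - 1 := by
    have : (3:ℝ) ≤ (k:ℝ) := by exact_mod_cast hk
    linarith
  have hν1 : (0:ℝ) < (n:ℝ) - 1 := by
    have : (3:ℝ) ≤ (n:ℝ) := by exact_mod_cast hn
    linarith
  apply sub_nonneg.mp
  have expand : ((n:ℝ) - 2) / (2 * ((n:ℝ) - 1)) * K ^ 2
      - ((K^2 - (A^2 + Q1 + Q2))/2 - (1/((k:ℝ)-1)) * A * S)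
      = (((n:ℝ)-1)*(((k:ℝ)-1)*(A^2+Q1+Q2) + 2*A*S) - ((k:ℝ)-1)*(A+S+R)^2)
        / (2*((n:ℝ)-1)*((k:ℝ)-1)) := by
    rw [hKdec]
    field_simp
    ring
  rw [expand]
  apply div_nonneg (by linarith) (by positivity)
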